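/- Let R = k⟦x,y,z⟧/(x²+z²) with i ∈ k satisfying i²+1=0. Then the annihilator of the stable endomorphism module of R/(z−ix)R equals the ideal (x,z)R. -/

import Mathlib

open CategoryTheory IsLocalRing

universe u

variable (R : Type u) [CommRing R]

/-- The submodule of `Hom_R(M,N)` consisting of maps factoring through a projective module. -/
def projStable (M N : Type u) [AddCommGroup M] [Module R M] [AddCommGroup N] [Module R N] :
    Submodule R (M →ₗ[R] N) where
  carrier := {f | ∃ (P : Type u) (_ : AddCommGroup P) (_ : Module R P)
    (_ : Module.Projective R P) (g : M →ₗ[R] P) (h : P →ₗ[R] N), f = h.comp g}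
  zero_mem' := ⟨PUnit, inferInstance, inferInstance, inferInstance, 0, 0, by ext x; simp⟩
  add_mem' := by
    rintro f f' ⟨P, _, _, _, g, h, rfl⟩ ⟨P', _, _, _, g', h', rfl⟩
    exact ⟨P × P', inferInstance, inferInstance, inferInstance, g.prod g',
      h.comp (LinearMap.fst R P P') + h'.comp (LinearMap.snd R P P'), by ext x; simp⟩
  smul_mem' := by
    rintro r f ⟨P, _, _, _, g, h, rfl⟩
    exact ⟨P, inferInstance, inferInstance, inferInstance, g, r • h, by ext x; simp⟩

/-- The stable hom module `Hom_R(M,N)/P_R(M,N)`. -/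
def stableHom (M N : Type u) [AddCommGroup M] [Module R M] [AddCommGroup N] [Module R N] :=
  (M →ₗ[R] N) ⧸ projStable R M N

noncomputable instance (M N : Type u) [AddCommGroup M] [Module R M] [AddCommGroup N]
    [Module R N] : AddCommGroup (stableHom R M N) :=
  inferInstanceAs (AddCommGroup ((M →ₗ[R] N) ⧸ projStable R M N))

noncomputable instance (M N : Type u) [AddCommGroup M] [Module R M] [AddCommGroup N]
    [Module R N] : Module R (stableHom R M N) :=
  inferInstanceAs (Module R ((M →ₗ[R] N) ⧸ projStable R M N))

/-- `Ann(M)`: the annihilator of the stable endomorphism module of `M`. -/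
noncomputable def stAnn (M : Type u) [AddCommGroup M] [Module R M] : Ideal R :=
  Module.annihilator R (stableHom R M M)

/-- `Ext_R^n(M,N)` as an `R`-module. -/
noncomputable abbrev ExtM (n : ℕ) (M : ModuleCat.{u} R) (N : ModuleCat.{u} R) :
    ModuleCat.{u} R :=
  ((Ext R (ModuleCat.{u} R) n).obj (Opposite.op M)).obj N

/-- `ca^n(R)`, the `n`-th cohomology annihilator ideal. -/
noncomputable def ca (n : ℕ) : Ideal R :=
  ⨅ (m : ℕ) (_ : n ≤ m) (M : ModuleCat.{u} R) (N : ModuleCat.{u} R)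
    (_ : Module.Finite R M) (_ : Module.Finite R N),
    Module.annihilator R (ExtM R m M N)


/-- The two-dimensional A-infinity hypersurface `k⟦x,y,z⟧/(x²+z²)`. -/
noncomputable abbrev Ainf2 (k : Type u) [Field k] : Type u :=
  (MvPowerSeries (Fin 3) k) ⧸
    (Ideal.span {(MvPowerSeries.X (0 : Fin 3) : MvPowerSeries (Fin 3) k) ^ 2 +
      MvPowerSeries.X (2 : Fin 3) ^ 2})

/-- The image of `x` in `k⟦x,y,z⟧/(x²+z²)`. -/
noncomputable def bx (k : Type u) [Field k] : Ainf2 k :=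
  Ideal.Quotient.mk _ (MvPowerSeries.X 0)

/-- The image of `z` in `k⟦x,y,z⟧/(x²+z²)`. -/
noncomputable def bz (k : Type u) [Field k] : Ainf2 k :=
  Ideal.Quotient.mk _ (MvPowerSeries.X 2)

section Aux
open MvPowerSeries
variable (k : Type u) [Field k] (i : k)

lemma aS_ne_zero : (X 2 - C (σ := Fin 3) (R := k) i * X 0 : MvPowerSeries (Fin 3) k) ≠ 0 := by
  intro h
  have := congrArg (MvPowerSeries.coeff (R := k) (Finsupp.single (2 : Fin 3) 1)) h
  rw [map_sub, coeff_C_mul, coeff_X, coeff_X] at this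
  simp [Finsupp.single_eq_single_iff] at this

lemma prod_eq (hi : i ^ 2 + 1 = 0) :
    (X 2 - C (σ := Fin 3) (R := k) i * X 0) * (X 2 + C (σ := Fin 3) (R := k) i * X 0)
      = (X 0 : MvPowerSeries (Fin 3) k) ^ 2 + X 2 ^ 2 := by
  have h : (C (σ := Fin 3) (R := k) i) ^ 2 = -1 := by
    rw [← map_pow, show i ^ 2 = -1 by linear_combination hi, map_neg, map_one]
  ring_nf
  linear_combination (- (X (0:Fin 3) : MvPowerSeries (Fin 3) k) ^ 2) * h

lemma alg_eq : algebraMap k (Ainf2 k) i = Ideal.Quotient.mk _ (C (σ := Fin 3) (R := k) i) := by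
  rw [c_eq_algebraMap, Ideal.Quotient.mk_algebraMap]

lemma a_eq : bz k - algebraMap k (Ainf2 k) i * bx k
    = Ideal.Quotient.mk _ (X 2 - C (σ := Fin 3) (R := k) i * X 0) := by
  rw [alg_eq, bz, bx, map_sub, map_mul]

lemma b_eq : bz k + algebraMap k (Ainf2 k) i * bx k
    = Ideal.Quotient.mk _ (X 2 + C (σ := Fin 3) (R := k) i * X 0) := by
  rw [alg_eq, bz, bx, map_add, map_mul]

lemma ab_zero (hi : i ^ 2 + 1 = 0) :
    (bz k - algebraMap k (Ainf2 k) i * bx k) * (bz k + algebraMap k (Ainf2 k) i * bx k) = 0 := by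
  rw [a_eq, b_eq, ← map_mul, prod_eq k i hi, Ideal.Quotient.eq_zero_iff_mem]
  exact Ideal.subset_span rfl

lemma ann_sub (hi : i ^ 2 + 1 = 0) (u : Ainf2 k)
    (h : (bz k - algebraMap k (Ainf2 k) i * bx k) * u = 0) :
    u ∈ Ideal.span {bz k + algebraMap k (Ainf2 k) i * bx k} := by
  obtain ⟨U, rfl⟩ := Ideal.Quotient.mk_surjective u
  rw [a_eq, ← map_mul, Ideal.Quotient.eq_zero_iff_mem, Ideal.mem_span_singleton] at h
  obtain ⟨V, hV⟩ := h
  rw [← prod_eq k i hi] at hV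
  have hU : U = (X 2 + C (σ := Fin 3) (R := k) i * X 0) * V :=
    mul_left_cancel₀ (aS_ne_zero k i) (by rw [hV]; ring)
  rw [hU, map_mul, b_eq]
  exact Ideal.mul_mem_right _ _ (Ideal.subset_span rfl)

end Aux

lemma mem_stAnn_iff {R : Type u} [CommRing R] {M : Type u} [AddCommGroup M] [Module R M]
    (r : R) : r ∈ stAnn R M ↔ ∀ f : M →ₗ[R] M, r • f ∈ projStable R M M := by
  rw [stAnn, Module.mem_annihilator]
  constructor
  · intro h f
    have h1 := h (Submodule.Quotient.mk (p := projStable R M M) f)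
    exact (Submodule.Quotient.mk_eq_zero _).1
      ((Submodule.Quotient.mk_smul (projStable R M M) r f).trans h1)
  · intro h m
    obtain ⟨f, rfl⟩ := Submodule.Quotient.mk_surjective (projStable R M M) m
    exact ((Submodule.Quotient.mk_smul (projStable R M M) r f).symm.trans
      ((Submodule.Quotient.mk_eq_zero _).2 (h f)))

set_option maxHeartbeats 2000000 in
set_option synthInstance.maxHeartbeats 1000000 in
/-- Let `R = k⟦x,y,z⟧/(x²+z²)` with `i ∈ k`, `i²+1 = 0` (char k ≠ 2).
Then the annihilator of the stable endomorphism module of `R/(z-ix)R` equals `(x,z)R`. -/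
theorem stmt8 (k : Type u) [Field k] (hchar : ringChar k ≠ 2)
    (i : k) (hi : i ^ 2 + 1 = 0) :
    stAnn (Ainf2 k) ((Ainf2 k) ⧸
        (Ideal.span {bz k - algebraMap k (Ainf2 k) i * bx k} : Ideal (Ainf2 k)))
      = Ideal.span {bx k, bz k} := by
  set Rr := Ainf2 k
  set a : Rr := bz k - algebraMap k Rr i * bx k with ha
  set b : Rr := bz k + algebraMap k Rr i * bx k with hb
  set I : Ideal Rr := Ideal.span {a} with hI
  have hab : a * b = 0 := ab_zero k i hi
  have hann : ∀ u : Rr, a * u = 0 → u ∈ Ideal.span {b} := fun u => ann_sub k i hi u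
  have h2 : (2 : k) ≠ 0 := Ring.two_ne_zero hchar
  have hine : i ≠ 0 := by
    intro h0; rw [h0] at hi; simp at hi
  have h2i : (2 * i : k) ≠ 0 := mul_ne_zero h2 hine
  -- M and basic facts
  set M := Rr ⧸ I with hM
  have haM : ∀ m : M, a • m = 0 := by
    intro m
    obtain ⟨s, rfl⟩ := Submodule.Quotient.mk_surjective I m
    rw [← Submodule.Quotient.mk_smul, Submodule.Quotient.mk_eq_zero]
    exact Ideal.mul_mem_right s I (Ideal.subset_span rfl)
  have haf : ∀ f : M →ₗ[Rr] M, a • f = 0 := fun f => LinearMap.ext fun m => haM (f m)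
  -- the "multiplication by b" lift β : M →ₗ Rr
  have hker : I ≤ LinearMap.ker (LinearMap.lsmul Rr Rr b) := by
    rw [hI, Ideal.span_le]
    rintro x rfl
    simp only [SetLike.mem_coe, LinearMap.mem_ker, LinearMap.lsmul_apply, smul_eq_mul]
    rw [mul_comm]; exact hab
  set β : M →ₗ[Rr] Rr := Submodule.liftQ I (LinearMap.lsmul Rr Rr b) hker with hβ
  have hβm : ∀ m : M, Submodule.mkQ I (β m) = b • m := by
    intro m
    obtain ⟨s, rfl⟩ := Submodule.Quotient.mk_surjective I m
    rw [hβ, Submodule.liftQ_apply, ← Submodule.Quotient.mk_smul]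
    rfl
  have hbf : ∀ f : M →ₗ[Rr] M, b • f ∈ projStable Rr M M := by
    intro f
    refine ⟨Rr, inferInstance, inferInstance, inferInstance, β.comp f, Submodule.mkQ I,
      LinearMap.ext fun m => ?_⟩
    simp only [LinearMap.smul_apply, LinearMap.coe_comp, Function.comp_apply]
    exact (hβm (f m)).symm
  -- decompositions of bx and bz
  have hba : b - a = algebraMap k Rr (2 * i) * bx k := by
    rw [hb, ha, map_mul, map_ofNat]; ring
  have hbpa : b + a = algebraMap k Rr 2 * bz k := by
    rw [hb, ha, map_ofNat]; ring
  have hxd : bx k = algebraMap k Rr (2 * i)⁻¹ * (b - a) := by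
    rw [hba, ← mul_assoc, ← map_mul, inv_mul_cancel₀ h2i, map_one, one_mul]
  have hzd : bz k = algebraMap k Rr 2⁻¹ * (b + a) := by
    rw [hbpa, ← mul_assoc, ← map_mul, inv_mul_cancel₀ h2, map_one, one_mul]
  apply le_antisymm
  · -- stAnn ≤ span {bx, bz}
    intro r hr
    rw [mem_stAnn_iff] at hr
    obtain ⟨P, _, _, _, g, h, hcomp⟩ := hr LinearMap.id
    obtain ⟨h', hh'⟩ := Module.projective_lifting_property (Submodule.mkQ I) h
      (Submodule.mkQ_surjective I)
    set u : Rr := h' (g (Submodule.Quotient.mk 1)) with hu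
    have h1 : Submodule.Quotient.mk (p := I) u = Submodule.Quotient.mk r := by
      have : Submodule.mkQ I u = (h.comp g) (Submodule.Quotient.mk 1) := by
        rw [hu, ← hh']; rfl
      rw [← hcomp] at this
      simp only [LinearMap.smul_apply, LinearMap.id_apply] at this
      rw [Submodule.mkQ_apply] at this
      rw [this, ← Submodule.Quotient.mk_smul, smul_eq_mul, mul_one]
    have h2' : a * u = 0 := by
      have : a • u = h' (g (a • (Submodule.Quotient.mk (p := I) 1))) := by
        rw [hu, ← map_smul, ← map_smul]
      rw [haM, map_zero, map_zero] at this
      rwa [smul_eq_mul] at this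
    obtain ⟨d, hd⟩ := Ideal.mem_span_singleton'.1 (hann u h2')
    have hur : u - r ∈ I := (Submodule.Quotient.eq I).1 h1
    obtain ⟨c, hc⟩ := Ideal.mem_span_singleton'.1 (by rwa [hI] at hur)
    have hr_eq : r = d * b - c * a := by
      linear_combination hc - hd
    have hxz_a : a ∈ Ideal.span {bx k, bz k} := by
      rw [ha]
      exact sub_mem (Ideal.subset_span (by simp))
        (Ideal.mul_mem_left _ _ (Ideal.subset_span (by simp)))
    have hxz_b : b ∈ Ideal.span {bx k, bz k} := by
      rw [hb]
      exact add_mem (Ideal.subset_span (by simp))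
        (Ideal.mul_mem_left _ _ (Ideal.subset_span (by simp)))
    rw [hr_eq]
    exact sub_mem (Ideal.mul_mem_left _ _ hxz_b) (Ideal.mul_mem_left _ _ hxz_a)
  · -- span {bx, bz} ≤ stAnn
    rw [Ideal.span_le]
    rintro w hw
    simp only [Set.mem_insert_iff, Set.mem_singleton_iff] at hw
    rcases hw with rfl | rfl
    · rw [SetLike.mem_coe, mem_stAnn_iff]
      intro f
      rw [hxd, show ((algebraMap k Rr) (2 * i)⁻¹ * (b - a)) • f = (algebraMap k Rr) (2 * i)⁻¹ • (b - a) • f from LinearMap.ext fun m => mul_smul ((algebraMap k Rr) (2 * i)⁻¹) (b - a) (f m), show (b - a) • f = b • f - a • f from LinearMap.ext fun m => sub_smul b a (f m), haf, sub_zero]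
      exact Submodule.smul_mem _ _ (hbf f)
    · rw [SetLike.mem_coe, mem_stAnn_iff]
      intro f
      rw [hzd, show ((algebraMap k Rr) 2⁻¹ * (b + a)) • f = (algebraMap k Rr) 2⁻¹ • (b + a) • f from LinearMap.ext fun m => mul_smul ((algebraMap k Rr) 2⁻¹) (b + a) (f m), add_smul, haf, add_zero]
      exact Submodule.smul_mem _ _ (hbf f)
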